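/- Let u be a rational with u ∉ {0, 4, -4, -2, -8, -20} and such that all denominators below are nonzero, and set t2 = (u^2 + 10u + 16)/((u-4)(u+4)), t3 = (16 - u^2)/(6u), t1 = 3(3u^4 + 40u^3 + 368u^2 + 1280u + 1024)/(4(u^2 + 10u + 16)(u + 20)u). Define a1, a2, a3 by Lasić's parametrization and a4, a5 as the regular extensions. Then a4·a5 + 1 is the square of a rational number, so {a1, a2, a3, a4, a5} has all pairwise products plus one equal to rational squares. -/

import Mathlib

set_option maxHeartbeats 1000000



/-- The two-parameter family restricted by the choice of t1 yields rational
Diophantine quintuples. -/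
theorem stmt_12 (u : ℚ) (hu0 : u ≠ 0) (hu4 : u ≠ 4) (hu4' : u ≠ -4)
    (hu2 : u ≠ -2) (hu8 : u ≠ -8) (hu20 : u ≠ -20)
    (t1 t2 t3 : ℚ)
    (ht2 : t2 = (u ^ 2 + 10 * u + 16) / ((u - 4) * (u + 4)))
    (ht3 : t3 = (16 - u ^ 2) / (6 * u))
    (ht1 : t1 = 3 * (3 * u ^ 4 + 40 * u ^ 3 + 368 * u ^ 2 + 1280 * u + 1024) /
      (4 * (u ^ 2 + 10 * u + 16) * (u + 20) * u))
    (hq : u ^ 2 + 10 * u + 16 ≠ 0)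
    (hden : (t1 * t2 * t3) ^ 2 ≠ 1)
    (a1 a2 a3 a4 a5 : ℚ)
    (ha1 : a1 = 2 * t1 * (1 + t1 * t2 * (1 + t2 * t3)) /
      ((t1 * t2 * t3 - 1) * (t1 * t2 * t3 + 1)))
    (ha2 : a2 = 2 * t2 * (1 + t2 * t3 * (1 + t3 * t1)) /
      ((t1 * t2 * t3 - 1) * (t1 * t2 * t3 + 1)))
    (ha3 : a3 = 2 * t3 * (1 + t3 * t1 * (1 + t1 * t2)) /
      ((t1 * t2 * t3 - 1) * (t1 * t2 * t3 + 1)))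
    (ha4 : a4 = -2 * (1 - t3 + t2 * t3) * (t3 * t1 + 1 - t1) * (-t2 + 1 + t1 * t2) *
      (t1 * t2 * t3 - 1) / (1 + t1 * t2 * t3) ^ 3)
    (ha5 : a5 = 2 * (t3 + t2 * t3 + 1) * (t3 * t1 + t1 + 1) * (1 + t2 + t1 * t2) *
      (1 + t1 * t2 * t3) / (t1 * t2 * t3 - 1) ^ 3) :
    (∃ q : ℚ, a4 * a5 + 1 = q ^ 2) ∧
    ∀ x ∈ [a1, a2, a3, a4, a5], ∀ y ∈ [a1, a2, a3, a4, a5],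
      x ≠ y → ∃ q : ℚ, x * y + 1 = q ^ 2 := by
  have hum4 : u - 4 ≠ 0 := sub_ne_zero.mpr hu4
  have hup4 : u + 4 ≠ 0 := fun h => hu4' (by linarith)
  have hup2 : u + 2 ≠ 0 := fun h => hu2 (by linarith)
  have hup8 : u + 8 ≠ 0 := fun h => hu8 (by linarith)
  have hup20 : u + 20 ≠ 0 := fun h => hu20 (by linarith)
  have hq2 : u * (u + 10) + 16 ≠ 0 := by convert hq using 1; ring
  have h1 : t1 * t2 * t3 - 1 ≠ 0 := by
    intro h
    apply hden
    rw [sub_eq_zero] at h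
    rw [h]; norm_num
  have h2 : t1 * t2 * t3 + 1 ≠ 0 := by
    intro h
    apply hden
    have h' : t1 * t2 * t3 = -1 := by linarith
    rw [h']; norm_num
  have key1 : t1 * t2 * t3 - 1 = -(9*u^4 + 144*u^3 + 1584*u^2 + 3840*u + 3072) / (24 * u^2 * (u + 20)) := by
    rw [ht1, ht2, ht3]
    field_simp
    ring
  have key2 : t1 * t2 * t3 + 1 = -((u + 8) * (9*u^3 + 24*u^2 + 432*u + 384)) / (24 * u^2 * (u + 20)) := by
    rw [ht1, ht2, ht3]
    field_simp
    ring
  have key2' : 1 + t1 * t2 * t3 = -((u + 8) * (9*u^3 + 24*u^2 + 432*u + 384)) / (24 * u^2 * (u + 20)) := by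
    rw [add_comm]; exact key2
  have hM : (9*u^4 + 144*u^3 + 1584*u^2 + 3840*u + 3072 : ℚ) ≠ 0 := by
    intro h
    apply h1
    rw [key1, h]
    simp
  have hC : (9*u^3 + 24*u^2 + 432*u + 384 : ℚ) ≠ 0 := by
    intro h
    apply h2
    rw [key2, h]
    simp
  have h24 : (24 * u^2 * (u + 20) : ℚ) ≠ 0 := by
    refine mul_ne_zero (mul_ne_zero (by norm_num) (pow_ne_zero 2 hu0)) hup20
  have keyP : (t1 * t2 * t3 - 1) * (t1 * t2 * t3 + 1)
      = ((9*u^4 + 144*u^3 + 1584*u^2 + 3840*u + 3072) * ((u + 8) * (9*u^3 + 24*u^2 + 432*u + 384))) / ((24 * u^2 * (u + 20)) * (24 * u^2 * (u + 20))) := by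
    rw [key1, key2, div_mul_div_comm]
    rw [neg_mul_neg]
  have keyP4 : (1 + t1 * t2 * t3) ^ 3
      = (-((u + 8) * (9*u^3 + 24*u^2 + 432*u + 384)))^3 / (24 * u^2 * (u + 20))^3 := by
    rw [key2', div_pow]
  have keyP5 : (t1 * t2 * t3 - 1) ^ 3
      = (-(9*u^4 + 144*u^3 + 1584*u^2 + 3840*u + 3072))^3 / (24 * u^2 * (u + 20))^3 := by
    rw [key1, div_pow]
  have hd1 : (((u - 4) * (u + 2) * (u + 8) * (9*u^4 + 144*u^3 + 1584*u^2 + 3840*u + 3072) * (9*u^3 + 24*u^2 + 432*u + 384)) : ℚ) ≠ 0 := (mul_ne_zero (mul_ne_zero (mul_ne_zero (mul_ne_zero (hum4) (hup2)) (hup8)) (hM)) (hC))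
  have e1 : a1 = (((-972)*u^9 + (-15552)*u^8 + (-226368)*u^7 + (-1886976)*u^6 + (-12994560)*u^5 + (-56954880)*u^4 + (-124747776)*u^3 + (-134479872)*u^2 + (-56623104)*u)) / ((u - 4) * (u + 2) * (u + 8) * (9*u^4 + 144*u^3 + 1584*u^2 + 3840*u + 3072) * (9*u^3 + 24*u^2 + 432*u + 384)) := by
    rw [ha1, keyP, div_div_eq_mul_div, ht1, ht2, ht3]
    rw [div_eq_div_iff (mul_ne_zero hM (mul_ne_zero hup8 hC)) hd1]
    field_simp
    ring
  have hd2 : (((u - 4) * (u + 4) * (9*u^4 + 144*u^3 + 1584*u^2 + 3840*u + 3072) * (9*u^3 + 24*u^2 + 432*u + 384)) : ℚ) ≠ 0 := (mul_ne_zero (mul_ne_zero (mul_ne_zero (hum4) (hup4)) (hM)) (hC))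
  have e2 : a2 = ((72*u^9 + 2352*u^8 + 22848*u^7 + 95232*u^6 + (-122880)*u^5 + (-4534272)*u^4 + (-18333696)*u^3 + (-28311552)*u^2 + (-15728640)*u)) / ((u - 4) * (u + 4) * (9*u^4 + 144*u^3 + 1584*u^2 + 3840*u + 3072) * (9*u^3 + 24*u^2 + 432*u + 384)) := by
    rw [ha2, keyP, div_div_eq_mul_div, ht1, ht2, ht3]
    rw [div_eq_div_iff (mul_ne_zero hM (mul_ne_zero hup8 hC)) hd2]
    field_simp
    ring
  have hd3 : (((u + 2) * (u + 8) * (9*u^4 + 144*u^3 + 1584*u^2 + 3840*u + 3072) * (9*u^3 + 24*u^2 + 432*u + 384)) : ℚ) ≠ 0 := (mul_ne_zero (mul_ne_zero (mul_ne_zero (hup2) (hup8)) (hM)) (hC))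
  have e3 : a3 = ((234*u^9 + 4656*u^8 + 44832*u^7 + 217344*u^6 + 579072*u^5 + (-1142784)*u^4 + (-17080320)*u^3 + (-54067200)*u^2 + (-73924608)*u + (-37748736))) / ((u + 2) * (u + 8) * (9*u^4 + 144*u^3 + 1584*u^2 + 3840*u + 3072) * (9*u^3 + 24*u^2 + 432*u + 384)) := by
    rw [ha3, keyP, div_div_eq_mul_div, ht1, ht2, ht3]
    rw [div_eq_div_iff (mul_ne_zero hM (mul_ne_zero hup8 hC)) hd3]
    field_simp
    ring
  have hd4 : (((u - 4) * (u + 4) * (u + 2) * (u + 8) * (9*u^3 + 24*u^2 + 432*u + 384) * (9*u^3 + 24*u^2 + 432*u + 384) * (9*u^3 + 24*u^2 + 432*u + 384)) : ℚ) ≠ 0 := (mul_ne_zero (mul_ne_zero (mul_ne_zero (mul_ne_zero (mul_ne_zero (mul_ne_zero (hum4) (hup4)) (hup2)) (hup8)) (hC)) (hC)) (hC))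
  have e4 : a4 = (((-5832)*u^12 + (-149040)*u^11 + (-2253312)*u^10 + (-19166976)*u^9 + (-111144960)*u^8 + (-471601152)*u^7 + (-1263403008)*u^6 + (-2371682304)*u^5 + 2675441664*u^4 + 40542142464*u^3 + 112944218112*u^2 + 132875550720*u + 57982058496)) / ((u - 4) * (u + 4) * (u + 2) * (u + 8) * (9*u^3 + 24*u^2 + 432*u + 384) * (9*u^3 + 24*u^2 + 432*u + 384) * (9*u^3 + 24*u^2 + 432*u + 384)) := by
    rw [ha4, keyP4, div_div_eq_mul_div, ht1, ht2, ht3]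
    rw [div_eq_div_iff (pow_ne_zero 3 (neg_ne_zero.mpr (mul_ne_zero hup8 hC))) hd4]
    field_simp
    ring
  have hd5 : (((u - 4) * (u + 4) * (9*u^4 + 144*u^3 + 1584*u^2 + 3840*u + 3072) * (9*u^4 + 144*u^3 + 1584*u^2 + 3840*u + 3072) * (9*u^4 + 144*u^3 + 1584*u^2 + 3840*u + 3072)) : ℚ) ≠ 0 := (mul_ne_zero (mul_ne_zero (mul_ne_zero (mul_ne_zero (hum4) (hup4)) (hM)) (hM)) (hM))
  have e5 : a5 = ((5508*u^14 + 144072*u^13 + 1416384*u^12 + 1139328*u^11 + (-143373312)*u^10 + (-2081212416)*u^9 + (-17340088320)*u^8 + (-98054995968)*u^7 + (-373910667264)*u^6 + (-944190259200)*u^5 + (-1551020064768)*u^4 + (-1593298649088)*u^3 + (-927712935936)*u^2 + (-231928233984)*u)) / ((u - 4) * (u + 4) * (9*u^4 + 144*u^3 + 1584*u^2 + 3840*u + 3072) * (9*u^4 + 144*u^3 + 1584*u^2 + 3840*u + 3072) * (9*u^4 + 144*u^3 + 1584*u^2 + 3840*u + 3072)) := by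
    rw [ha5, keyP5, div_div_eq_mul_div, ht1, ht2, ht3]
    rw [div_eq_div_iff (pow_ne_zero 3 (neg_ne_zero.mpr hM)) hd5]
    field_simp
    ring
  have hqd12 : (((u - 4) * (9*u^4 + 144*u^3 + 1584*u^2 + 3840*u + 3072) * (9*u^3 + 24*u^2 + 432*u + 384)) : ℚ) ≠ 0 := (mul_ne_zero (mul_ne_zero (hum4) (hM)) (hC))
  have p12 : ∃ q : ℚ, a1 * a2 + 1 = q ^ 2 := by
    refine ⟨((81*u^8 + 756*u^7 + 5760*u^6 + (-3456)*u^5 + (-421632)*u^4 + (-2829312)*u^3 + (-8036352)*u^2 + (-10027008)*u + (-4718592))) / ((u - 4) * (9*u^4 + 144*u^3 + 1584*u^2 + 3840*u + 3072) * (9*u^3 + 24*u^2 + 432*u + 384)), ?_⟩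
    rw [e1, e2, div_mul_div_comm, div_add_one (mul_ne_zero hd1 hd2), div_pow]
    rw [div_eq_div_iff (mul_ne_zero hd1 hd2) (pow_ne_zero 2 hqd12)]
    ring
  have hqd13 : (((u + 2) * (u + 8) * (9*u^4 + 144*u^3 + 1584*u^2 + 3840*u + 3072) * (9*u^3 + 24*u^2 + 432*u + 384)) : ℚ) ≠ 0 := (mul_ne_zero (mul_ne_zero (mul_ne_zero (hup2) (hup8)) (hM)) (hC))
  have p13 : ∃ q : ℚ, a1 * a3 + 1 = q ^ 2 := by
    refine ⟨((81*u^9 + 918*u^8 + 10080*u^7 + 86976*u^6 + 836352*u^5 + 5008896*u^4 + 18800640*u^3 + 38928384*u^2 + 42467328*u + 18874368)) / ((u + 2) * (u + 8) * (9*u^4 + 144*u^3 + 1584*u^2 + 3840*u + 3072) * (9*u^3 + 24*u^2 + 432*u + 384)), ?_⟩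
    rw [e1, e3, div_mul_div_comm, div_add_one (mul_ne_zero hd1 hd3), div_pow]
    rw [div_eq_div_iff (mul_ne_zero hd1 hd3) (pow_ne_zero 2 hqd13)]
    ring
  have hqd14 : (((u - 4) * (u + 2) * (u + 8) * (9*u^3 + 24*u^2 + 432*u + 384) * (9*u^3 + 24*u^2 + 432*u + 384)) : ℚ) ≠ 0 := (mul_ne_zero (mul_ne_zero (mul_ne_zero (mul_ne_zero (hum4) (hup2)) (hup8)) (hC)) (hC))
  have p14 : ∃ q : ℚ, a1 * a4 + 1 = q ^ 2 := by
    refine ⟨((81*u^9 + 918*u^8 + 12888*u^7 + 101952*u^6 + 555264*u^5 + 1608192*u^4 + 1419264*u^3 + (-1916928)*u^2 + (-10616832)*u + (-9437184))) / ((u - 4) * (u + 2) * (u + 8) * (9*u^3 + 24*u^2 + 432*u + 384) * (9*u^3 + 24*u^2 + 432*u + 384)), ?_⟩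
    rw [e1, e4, div_mul_div_comm, div_add_one (mul_ne_zero hd1 hd4), div_pow]
    rw [div_eq_div_iff (mul_ne_zero hd1 hd4) (pow_ne_zero 2 hqd14)]
    ring
  have hqd15 : (((u - 4) * (9*u^4 + 144*u^3 + 1584*u^2 + 3840*u + 3072) * (9*u^4 + 144*u^3 + 1584*u^2 + 3840*u + 3072)) : ℚ) ≠ 0 := (mul_ne_zero (mul_ne_zero (hum4) (hM)) (hM))
  have p15 : ∃ q : ℚ, a1 * a5 + 1 = q ^ 2 := by
    refine ⟨((81*u^9 + (-1404)*u^8 + (-35136)*u^7 + (-449280)*u^6 + (-3089664)*u^5 + (-13759488)*u^4 + (-42762240)*u^3 + (-81395712)*u^2 + (-84934656)*u + (-37748736))) / ((u - 4) * (9*u^4 + 144*u^3 + 1584*u^2 + 3840*u + 3072) * (9*u^4 + 144*u^3 + 1584*u^2 + 3840*u + 3072)), ?_⟩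
    rw [e1, e5, div_mul_div_comm, div_add_one (mul_ne_zero hd1 hd5), div_pow]
    rw [div_eq_div_iff (mul_ne_zero hd1 hd5) (pow_ne_zero 2 hqd15)]
    ring
  have hqd23 : (((9*u^4 + 144*u^3 + 1584*u^2 + 3840*u + 3072) * (9*u^3 + 24*u^2 + 432*u + 384)) : ℚ) ≠ 0 := (mul_ne_zero (hM) (hC))
  have p23 : ∃ q : ℚ, a2 * a3 + 1 = q ^ 2 := by
    refine ⟨((153*u^7 + 3144*u^6 + 26976*u^5 + 153600*u^4 + 496896*u^3 + 1185792*u^2 + 1818624*u + 1179648)) / ((9*u^4 + 144*u^3 + 1584*u^2 + 3840*u + 3072) * (9*u^3 + 24*u^2 + 432*u + 384)), ?_⟩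
    rw [e2, e3, div_mul_div_comm, div_add_one (mul_ne_zero hd2 hd3), div_pow]
    rw [div_eq_div_iff (mul_ne_zero hd2 hd3) (pow_ne_zero 2 hqd23)]
    ring
  have hqd24 : (((u - 4) * (u + 4) * (9*u^3 + 24*u^2 + 432*u + 384) * (9*u^3 + 24*u^2 + 432*u + 384)) : ℚ) ≠ 0 := (mul_ne_zero (mul_ne_zero (mul_ne_zero (hum4) (hup4)) (hC)) (hC))
  have p24 : ∃ q : ℚ, a2 * a4 + 1 = q ^ 2 := by
    refine ⟨((81*u^8 + 144*u^7 + (-1200)*u^6 + (-39936)*u^5 + (-165120)*u^4 + (-393216)*u^3 + 12288*u^2 + (-1376256)*u + (-2359296))) / ((u - 4) * (u + 4) * (9*u^3 + 24*u^2 + 432*u + 384) * (9*u^3 + 24*u^2 + 432*u + 384)), ?_⟩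
    rw [e2, e4, div_mul_div_comm, div_add_one (mul_ne_zero hd2 hd4), div_pow]
    rw [div_eq_div_iff (mul_ne_zero hd2 hd4) (pow_ne_zero 2 hqd24)]
    ring
  have hqd25 : (((u - 4) * (u + 4) * (9*u^4 + 144*u^3 + 1584*u^2 + 3840*u + 3072) * (9*u^4 + 144*u^3 + 1584*u^2 + 3840*u + 3072)) : ℚ) ≠ 0 := (mul_ne_zero (mul_ne_zero (mul_ne_zero (hum4) (hup4)) (hM)) (hM))
  have p25 : ∃ q : ℚ, a2 * a5 + 1 = q ^ 2 := by
    refine ⟨((225*u^10 + 6432*u^9 + 60816*u^8 + 183552*u^7 + (-1630464)*u^6 + (-18911232)*u^5 + (-92147712)*u^4 + (-253624320)*u^3 + (-413663232)*u^2 + (-377487360)*u + (-150994944))) / ((u - 4) * (u + 4) * (9*u^4 + 144*u^3 + 1584*u^2 + 3840*u + 3072) * (9*u^4 + 144*u^3 + 1584*u^2 + 3840*u + 3072)), ?_⟩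
    rw [e2, e5, div_mul_div_comm, div_add_one (mul_ne_zero hd2 hd5), div_pow]
    rw [div_eq_div_iff (mul_ne_zero hd2 hd5) (pow_ne_zero 2 hqd25)]
    ring
  have hqd34 : (((u + 2) * (u + 8) * (9*u^3 + 24*u^2 + 432*u + 384) * (9*u^3 + 24*u^2 + 432*u + 384)) : ℚ) ≠ 0 := (mul_ne_zero (mul_ne_zero (mul_ne_zero (hup2) (hup8)) (hC)) (hC))
  have p34 : ∃ q : ℚ, a3 * a4 + 1 = q ^ 2 := by
    refine ⟨((81*u^8 + 306*u^7 + (-4656)*u^6 + (-76224)*u^5 + (-552192)*u^4 + (-2600448)*u^3 + (-7360512)*u^2 + (-11698176)*u + (-7077888))) / ((u + 2) * (u + 8) * (9*u^3 + 24*u^2 + 432*u + 384) * (9*u^3 + 24*u^2 + 432*u + 384)), ?_⟩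
    rw [e3, e4, div_mul_div_comm, div_add_one (mul_ne_zero hd3 hd4), div_pow]
    rw [div_eq_div_iff (mul_ne_zero hd3 hd4) (pow_ne_zero 2 hqd34)]
    ring
  have hqd35 : (((9*u^4 + 144*u^3 + 1584*u^2 + 3840*u + 3072) * (9*u^4 + 144*u^3 + 1584*u^2 + 3840*u + 3072)) : ℚ) ≠ 0 := (mul_ne_zero (hM) (hM))
  have p35 : ∃ q : ℚ, a3 * a5 + 1 = q ^ 2 := by
    refine ⟨((387*u^8 + 6720*u^7 + 47904*u^6 + 58368*u^5 + (-957696)*u^4 + (-5996544)*u^3 + (-15237120)*u^2 + (-18874368)*u + (-9437184))) / ((9*u^4 + 144*u^3 + 1584*u^2 + 3840*u + 3072) * (9*u^4 + 144*u^3 + 1584*u^2 + 3840*u + 3072)), ?_⟩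
    rw [e3, e5, div_mul_div_comm, div_add_one (mul_ne_zero hd3 hd5), div_pow]
    rw [div_eq_div_iff (mul_ne_zero hd3 hd5) (pow_ne_zero 2 hqd35)]
    ring
  have hqd45 : (((u - 4) * (u + 4) * (9*u^4 + 144*u^3 + 1584*u^2 + 3840*u + 3072) * (9*u^3 + 24*u^2 + 432*u + 384)) : ℚ) ≠ 0 := (mul_ne_zero (mul_ne_zero (mul_ne_zero (hum4) (hup4)) (hM)) (hC))
  have p45 : ∃ q : ℚ, a4 * a5 + 1 = q ^ 2 := by
    refine ⟨((81*u^9 + (-936)*u^8 + (-27408)*u^7 + (-269184)*u^6 + (-1252608)*u^5 + (-3397632)*u^4 + (-2420736)*u^3 + 9535488*u^2 + 25952256*u + 18874368)) / ((u - 4) * (u + 4) * (9*u^4 + 144*u^3 + 1584*u^2 + 3840*u + 3072) * (9*u^3 + 24*u^2 + 432*u + 384)), ?_⟩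
    rw [e4, e5, div_mul_div_comm, div_add_one (mul_ne_zero hd4 hd5), div_pow]
    rw [div_eq_div_iff (mul_ne_zero hd4 hd5) (pow_ne_zero 2 hqd45)]
    ring
  refine ⟨p45, ?_⟩
  intro x hx y hy hxy
  simp only [List.mem_cons, List.not_mem_nil, or_false] at hx hy
  rcases hx with rfl | rfl | rfl | rfl | rfl <;> rcases hy with rfl | rfl | rfl | rfl | rfl
  · exact absurd rfl hxy
  · exact p12
  · exact p13
  · exact p14
  · exact p15
  · obtain ⟨q, hq'⟩ := p12
    exact ⟨q, by rw [mul_comm]; exact hq'⟩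
  · exact absurd rfl hxy
  · exact p23
  · exact p24
  · exact p25
  · obtain ⟨q, hq'⟩ := p13
    exact ⟨q, by rw [mul_comm]; exact hq'⟩
  · obtain ⟨q, hq'⟩ := p23
    exact ⟨q, by rw [mul_comm]; exact hq'⟩
  · exact absurd rfl hxy
  · exact p34
  · exact p35
  · obtain ⟨q, hq'⟩ := p14
    exact ⟨q, by rw [mul_comm]; exact hq'⟩
  · obtain ⟨q, hq'⟩ := p24
    exact ⟨q, by rw [mul_comm]; exact hq'⟩
  · obtain ⟨q, hq'⟩ := p34
    exact ⟨q, by rw [mul_comm]; exact hq'⟩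
  · exact absurd rfl hxy
  · exact p45
  · obtain ⟨q, hq'⟩ := p15
    exact ⟨q, by rw [mul_comm]; exact hq'⟩
  · obtain ⟨q, hq'⟩ := p25
    exact ⟨q, by rw [mul_comm]; exact hq'⟩
  · obtain ⟨q, hq'⟩ := p35
    exact ⟨q, by rw [mul_comm]; exact hq'⟩
  · obtain ⟨q, hq'⟩ := p45
    exact ⟨q, by rw [mul_comm]; exact hq'⟩
  · exact absurd rfl hxy
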